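/- Let k be a commutative ring, A a k-algebra, e an idempotent of A, Λ := eAe, and Δ0 := Ae ⊗_Λ eA. For λ ∈ Z(Λ), the A-A-bimodule homomorphism ω_λ: Δ0 ⊗_A Δ0 → Δ0 is an isomorphism if and only if λ is an invertible element of Z(Λ). -/

import Mathlib

/-!
Common setup: bimodules over a ring `A`, a universal-property description of the
`A`-`A`-bimodule `Ae ⊗_{eAe} eA` (with distinguished element `u = e ⊗ e`),
a universal-property description of tensor products of bimodules over `A`,
and the center of the corner ring `eAe`.
-/

open MulOpposite

universe u

namespace Paper

/-- A bundled `A`-`A`-bimodule, encoded via commuting left `A`- and left `Aᵐᵒᵖ`-actions. -/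
structure Bimod (A : Type u) [Ring A] : Type (u + 1) where
  carrier : Type u
  [addCommGroup : AddCommGroup carrier]
  [modLeft : Module A carrier]
  [modRight : Module Aᵐᵒᵖ carrier]
  [smulComm : SMulCommClass A Aᵐᵒᵖ carrier]

attribute [instance] Bimod.addCommGroup Bimod.modLeft Bimod.modRight Bimod.smulComm

/-- A homomorphism of `A`-`A`-bimodules. -/
def IsBimodHom (A : Type u) [Ring A] {X Y : Type u} [AddCommGroup X] [AddCommGroup Y]
    [Module A X] [Module Aᵐᵒᵖ X] [Module A Y] [Module Aᵐᵒᵖ Y] (g : X → Y) : Prop :=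
  (∀ x y : X, g (x + y) = g x + g y) ∧ (∀ (a : A) (x : X), g (a • x) = a • g x) ∧
    (∀ (a : Aᵐᵒᵖ) (x : X), g (a • x) = a • g x)

variable (A : Type u) [Ring A]

/-- `(X, u)` is a model for the `A`-`A`-bimodule `Ae ⊗_{eAe} eA`, where `u` plays the
role of `e ⊗ e`.  This is expressed by the universal property: bimodule maps out of `X`
correspond exactly to elements `v` of the target with `v = e v e` and
`λ • v = v • λ` for all `λ ∈ eAe`. -/
structure IsAeTensor (e : A) (X : Type u) [AddCommGroup X]
    [Module A X] [Module Aᵐᵒᵖ X] [SMulCommClass A Aᵐᵒᵖ X] (u : X) : Prop where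
  smul_e : e • u = u
  op_smul_e : op e • u = u
  balance : ∀ a : A, (e * a * e) • u = op (e * a * e) • u
  universal : ∀ (Y : Bimod.{u} A) (v : Y.carrier), e • v = v → op e • v = v →
    (∀ a : A, (e * a * e) • v = op (e * a * e) • v) →
      ∃! g : X → Y.carrier, IsBimodHom A g ∧ g u = v

/-- The element `ae ⊗ eb` of (a model `(X, u)` of) `Ae ⊗_{eAe} eA`. -/
def tmk (e : A) {X : Type u} [AddCommGroup X] [Module A X] [Module Aᵐᵒᵖ X]
    (u : X) (a b : A) : X :=
  (a * e) • (op (e * b) • u)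

/-- `t : X → Y → Z` is biadditive, `A`-balanced and bilinear over the outer
`A`-`A`-bimodule structures. -/
def IsBalancedBiadd {X Y Z : Type u} [AddCommGroup X] [AddCommGroup Y] [AddCommGroup Z]
    [Module A X] [Module Aᵐᵒᵖ X] [Module A Y] [Module Aᵐᵒᵖ Y] [Module A Z] [Module Aᵐᵒᵖ Z]
    (t : X → Y → Z) : Prop :=
  (∀ x x' y, t (x + x') y = t x y + t x' y) ∧
  (∀ x y y', t x (y + y') = t x y + t x y') ∧
  (∀ (a : A) x y, t (op a • x) y = t x (a • y)) ∧
  (∀ (a : A) x y, t (a • x) y = a • t x y) ∧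
  (∀ (a : A) x y, t x (op a • y) = op a • t x y)

/-- `t : X → Y → T` is a model for the tensor product `X ⊗_A Y` of `A`-`A`-bimodules. -/
structure IsTensorOverA {X Y T : Type u} [AddCommGroup X] [AddCommGroup Y] [AddCommGroup T]
    [Module A X] [Module Aᵐᵒᵖ X] [Module A Y] [Module Aᵐᵒᵖ Y] [Module A T] [Module Aᵐᵒᵖ T]
    [SMulCommClass A Aᵐᵒᵖ T] (t : X → Y → T) : Prop where
  balanced : IsBalancedBiadd A t
  universal : ∀ (Z : Bimod.{u} A) (s : X → Y → Z.carrier), IsBalancedBiadd A s →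
    ∃! g : T → Z.carrier, IsBimodHom A g ∧ ∀ x y, g (t x y) = s x y

/-- The center `Z(eAe)` of the corner ring `eAe`, as a subset of `A`. -/
def centerCorner (e : A) : Set A :=
  {z | z = e * z * e ∧ ∀ a : A, z * (e * a * e) = (e * a * e) * z}

end Paper

namespace Paper

open MulOpposite


section AuxLemmas
open MulOpposite
variable {A : Type u} [Ring A]

private theorem isBimodHom_id {X : Type u} [AddCommGroup X] [Module A X] [Module Aᵐᵒᵖ X] :
    IsBimodHom A (fun x : X => x) := ⟨fun _ _ => rfl, fun _ _ => rfl, fun _ _ => rfl⟩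

private theorem isBimodHom_comp {X Y Z : Type u} [AddCommGroup X] [AddCommGroup Y]
    [AddCommGroup Z] [Module A X] [Module Aᵐᵒᵖ X] [Module A Y] [Module Aᵐᵒᵖ Y]
    [Module A Z] [Module Aᵐᵒᵖ Z] {f : X → Y} {g : Y → Z}
    (hf : IsBimodHom A f) (hg : IsBimodHom A g) : IsBimodHom A (fun x => g (f x)) :=
  ⟨fun x y => by show g (f (x + y)) = g (f x) + g (f y); rw [hf.1, hg.1],
    fun a x => by show g (f (a • x)) = a • g (f x); rw [hf.2.1, hg.2.1],
    fun a x => by show g (f (a • x)) = a • g (f x); rw [hf.2.2, hg.2.2]⟩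

private theorem hom_eq_on {M N : Type u} [AddCommGroup M] [AddCommGroup N]
    {f g : M → N} (hf : ∀ x y, f (x + y) = f x + f y) (hg : ∀ x y, g (x + y) = g x + g y)
    {S : Set M} (hS : ∀ x : M, x ∈ AddSubgroup.closure S) (h : ∀ x ∈ S, f x = g x) :
    ∀ x, f x = g x := by
  intro x
  refine AddSubgroup.closure_induction (p := fun x _ => f x = g x) h ?_ ?_ ?_ (hS x)
  · show f 0 = g 0
    rw [show f 0 = 0 from map_zero (AddMonoidHom.mk' f hf),
      show g 0 = 0 from map_zero (AddMonoidHom.mk' g hg)]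
  · intro x y _ _ hx hy; show f (x + y) = g (x + y); rw [hf, hg]
    exact congrArg₂ (· + ·) hx hy
  · intro x _ hx
    show f (-x) = g (-x)
    rw [show f (-x) = - f x from map_neg (AddMonoidHom.mk' f hf) x,
      show g (-x) = - g x from map_neg (AddMonoidHom.mk' g hg) x]
    exact congrArg Neg.neg hx

private theorem hom_eq_on2 {M N : Type u} [AddCommGroup M] [AddCommGroup N]
    {f g : M → M → N}
    (hf1 : ∀ x y z, f (x + y) z = f x z + f y z) (hf2 : ∀ x y z, f x (y + z) = f x y + f x z)
    (hg1 : ∀ x y z, g (x + y) z = g x z + g y z) (hg2 : ∀ x y z, g x (y + z) = g x y + g x z)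
    {S : Set M} (hS : ∀ x : M, x ∈ AddSubgroup.closure S)
    (h : ∀ x ∈ S, ∀ y ∈ S, f x y = g x y) : ∀ x y, f x y = g x y := by
  have step1 : ∀ x ∈ S, ∀ y, f x y = g x y := fun x hx =>
    hom_eq_on (hf2 x) (hg2 x) hS (h x hx)
  intro x y
  exact hom_eq_on (f := fun x => f x y) (g := fun x => g x y)
    (fun a b => hf1 a b y) (fun a b => hg1 a b y) hS (fun x hx => step1 x hx y) x

private theorem genX (e : A) {X : Type u} [AddCommGroup X] [Module A X] [Module Aᵐᵒᵖ X]
    [SMulCommClass A Aᵐᵒᵖ X] (u : X) (hX : IsAeTensor A e X u) :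
    ∀ x : X, x ∈ AddSubgroup.closure (Set.range fun p : A × A => tmk A e u p.1 p.2) := by
  have hall : ∀ x : X, x ∈ Submodule.span A (Set.range fun b : A => op b • u) := by
    set S : Set X := Set.range fun b : A => op b • u with hSdef
    set p : Submodule A X := Submodule.span A S with hpdef
    have hop : ∀ (c : Aᵐᵒᵖ) (x : X), x ∈ p → c • x ∈ p := by
      intro c x hx
      refine Submodule.span_induction ?_ ?_ ?_ ?_ hx
      · rintro _ ⟨b, rfl⟩
        refine Submodule.subset_span ⟨b * c.unop, ?_⟩
        show op (b * unop c) • u = c • op b • u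
        rw [← mul_smul]
        conv_rhs => rw [← op_unop c]
        rw [← op_mul]
      · rw [smul_zero]; exact p.zero_mem
      · intro x y _ _ hx hy; rw [smul_add]; exact p.add_mem hx hy
      · intro a x _ hx; rw [← smul_comm a c x]; exact p.smul_mem a hx
    letI : SMul Aᵐᵒᵖ ↥p := ⟨fun c x => ⟨c • x.1, hop c x.1 x.2⟩⟩
    have hcoe : ∀ (c : Aᵐᵒᵖ) (x : ↥p), (c • x).1 = c • x.1 := fun _ _ => rfl
    letI : Module Aᵐᵒᵖ ↥p :=
      { one_smul := fun x => Subtype.ext (by rw [hcoe, one_smul])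
        mul_smul := fun c d x => Subtype.ext (by simp only [hcoe, mul_smul])
        smul_zero := fun c => Subtype.ext (by simp only [hcoe, ZeroMemClass.coe_zero, smul_zero])
        smul_add := fun c x y => Subtype.ext
          (by simp only [hcoe, AddMemClass.coe_add, smul_add])
        add_smul := fun c d x => Subtype.ext
          (by simp only [hcoe, AddMemClass.coe_add, add_smul])
        zero_smul := fun x => Subtype.ext
          (by simp only [hcoe, ZeroMemClass.coe_zero, zero_smul]) }
    letI : SMulCommClass A Aᵐᵒᵖ ↥p :=
      ⟨fun a c x => Subtype.ext (by
        have h1 : ((a • c • x : ↥p) : X) = a • c • (x : X) := by rw [SetLike.val_smul, hcoe]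
        have h2 : ((c • a • x : ↥p) : X) = c • a • (x : X) := by rw [hcoe, SetLike.val_smul]
        rw [h1, h2, smul_comm])⟩
    have hu : u ∈ p := by
      have h1 : op e • u ∈ p := Submodule.subset_span ⟨e, rfl⟩
      rwa [hX.op_smul_e] at h1
    obtain ⟨g, ⟨hg, hgu⟩, -⟩ := hX.universal ⟨↥p⟩ ⟨u, hu⟩
      (Subtype.ext (by rw [SetLike.val_smul]; exact hX.smul_e))
      (Subtype.ext (by rw [hcoe]; exact hX.op_smul_e))
      (fun a => Subtype.ext (by rw [SetLike.val_smul, hcoe]; exact hX.balance a))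
    have hval : IsBimodHom A (fun x : X => ((g x : ↥p) : X)) :=
      ⟨fun x y => congrArg Subtype.val (hg.1 x y),
        fun a x => congrArg Subtype.val (hg.2.1 a x),
        fun c x => congrArg Subtype.val (hg.2.2 c x)⟩
    obtain ⟨h, -, hun⟩ := hX.universal ⟨X⟩ u hX.smul_e hX.op_smul_e hX.balance
    have h1 : (fun x : X => ((g x : ↥p) : X)) = h :=
      hun _ ⟨hval, by show ((g u : ↥p) : X) = u; rw [hgu]⟩
    have h2 : (fun x : X => x) = h := hun _ ⟨isBimodHom_id, rfl⟩
    intro x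
    have : ((g x : ↥p) : X) = x := by rw [congrFun h1 x, ← congrFun h2 x]
    rw [← this]; exact (g x).2
  intro x
  refine Submodule.span_induction ?_ ?_ ?_ ?_ (hall x)
  · rintro _ ⟨b, rfl⟩
    refine AddSubgroup.subset_closure ⟨⟨1, b⟩, ?_⟩
    show tmk A e u 1 b = op b • u
    rw [tmk, one_mul, op_mul, mul_smul, hX.op_smul_e, smul_comm, hX.smul_e]
  · exact zero_mem _
  · intro x y _ _ hx hy; exact add_mem hx hy
  · intro a x _ hx
    refine AddSubgroup.closure_induction (p := fun x _ => a • x ∈ _) ?_ ?_ ?_ ?_ hx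
    · rintro _ ⟨⟨a', b⟩, rfl⟩
      refine AddSubgroup.subset_closure ⟨⟨a * a', b⟩, ?_⟩
      show tmk A e u (a * a') b = a • tmk A e u a' b
      rw [tmk, tmk, smul_smul, mul_assoc]
    · show a • (0 : X) ∈ _
      rw [smul_zero]; exact zero_mem _
    · intro x y _ _ hx hy
      show a • (x + y) ∈ _
      rw [smul_add]; exact add_mem hx hy
    · intro x _ hx
      show a • (-x) ∈ _
      rw [smul_neg]; exact neg_mem hx

end AuxLemmas

/-- For `λ ∈ Z(eAe)`, the bimodule homomorphism
`ω_λ : Δ₀ ⊗_A Δ₀ → Δ₀` is an isomorphism if and only if `λ` is an invertible element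
of `Z(eAe)` (whose identity element is `e`). -/
theorem omega_lam_isomorphism_iff_unit
    (k : Type u) [CommRing k] (A : Type u) [Ring A] [Algebra k A]
    (e : A) (he : IsIdempotentElem e)
    (X : Type u) [AddCommGroup X] [Module A X] [Module Aᵐᵒᵖ X] [SMulCommClass A Aᵐᵒᵖ X]
    (u : X) (hX : IsAeTensor A e X u)
    (T : Type u) [AddCommGroup T] [Module A T] [Module Aᵐᵒᵖ T] [SMulCommClass A Aᵐᵒᵖ T]
    (t : X → X → T) (hT : IsTensorOverA A t)
    (lam : A) (hlam : lam ∈ centerCorner A e)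
    (ω : T → X) (hω : IsBimodHom A ω)
    (hspec : ∀ b c b' c' : A, ω (t (tmk A e u b c) (tmk A e u b' c')) =
      tmk A e u (b * e * c * b') (lam * c')) :
    Function.Bijective ω ↔
      ∃ mu ∈ centerCorner A e, lam * mu = e ∧ mu * lam = e := by
  obtain ⟨hlam1, hlam2⟩ := hlam
  have ee : e * e = e := he
  have eex : ∀ x : A, e * (e * x) = e * x := fun x => by rw [← mul_assoc, ee]
  have elam : e * lam = lam := by
    conv_lhs => rw [hlam1, ← mul_assoc, ← mul_assoc, ee]
    exact hlam1.symm
  have lame : lam * e = lam := by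
    conv_lhs => rw [hlam1, mul_assoc (e * lam) e e, ee]
    exact hlam1.symm
  have sandR : ∀ a : A, (e * a * e) * e = e * a * e := fun a => by rw [mul_assoc, ee]
  have sandL : ∀ a : A, e * (e * a * e) = e * a * e := fun a => by
    rw [← mul_assoc, ← mul_assoc, ee]
  have hblam : op lam • u = lam • u := by
    have h := hX.balance lam
    rw [← hlam1] at h
    exact h.symm
  have hgen := genX e u hX
  -- uniqueness of bimodule endomorphisms of X fixing u
  obtain ⟨hXend, -, hXuniq⟩ := hX.universal ⟨X⟩ u hX.smul_e hX.op_smul_e hX.balance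
  have uniqX : ∀ f g : X → X, IsBimodHom A f → IsBimodHom A g → f u = u → g u = u → f = g :=
    fun f g hf hg hfu hgu => by rw [hXuniq f ⟨hf, hfu⟩, hXuniq g ⟨hg, hgu⟩]
  -- the multiplication map μ : X → A, tmk a b ↦ a e b
  obtain ⟨μ, ⟨hμhom, hμu⟩, -⟩ := hX.universal ⟨A⟩ e (show e * e = e from ee)
    (show e * e = e from ee)
    (fun a => show (e * a * e) * e = e * (e * a * e) by rw [sandR, sandL])
  have hμsm : ∀ (c : A) (x : X), μ (c • x) = c * μ x := fun c x => by rw [hμhom.2.1]; rfl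
  have hμop : ∀ (c : A) (x : X), μ (op c • x) = μ x * c := fun c x => by rw [hμhom.2.2]; rfl
  have hμc : ∀ c : A, μ (c • u) = c * e := fun c => by rw [hμsm, hμu]
  have hμtmk : ∀ a b : A, μ (tmk A e u a b) = a * e * b := by
    intro a b
    rw [tmk, hμsm, hμop, hμu]
    show (a * e) * (e * (e * b)) = a * e * b
    rw [eex b, ← mul_assoc, mul_assoc a e e, ee]
  -- middle multiplication maps
  have mkmid : ∀ z : A, z = e * z * e → (∀ a : A, z * (e * a * e) = (e * a * e) * z) →
      ∃ f : X → X, IsBimodHom A f ∧ f u = z • u := by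
    intro z hz1 hz2
    have ez : e * z = z := by
      conv_lhs => rw [hz1, ← mul_assoc, ← mul_assoc, ee]
      exact hz1.symm
    have c1 : e • (z • u) = z • u := by rw [smul_smul, ez]
    have c2 : op e • (z • u) = z • u := by rw [← smul_comm z (op e) u, hX.op_smul_e]
    have c3 : ∀ a : A, (e * a * e) • (z • u) = op (e * a * e) • (z • u) := by
      intro a
      rw [smul_smul, ← hz2 a, mul_smul z (e * a * e) u, hX.balance a,
        smul_comm z (op (e * a * e)) u]
    obtain ⟨f, hf, -⟩ := hX.universal ⟨X⟩ (z • u) c1 c2 c3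
    exact ⟨f, hf⟩
  obtain ⟨l, hlhom, hlu⟩ := mkmid lam hlam1 hlam2
  have hltmk : ∀ a b : A, l (tmk A e u a b) = tmk A e u (a * lam) b := by
    intro a b
    rw [tmk, tmk, hlhom.2.1, hlhom.2.2, hlu, ← smul_comm lam (op (e * b)) u,
      smul_smul (a * e) lam, mul_assoc a e lam, elam, mul_assoc a lam e, lame]
  obtain ⟨tadd1, tadd2, tbal, tsmul, topsmul⟩ := hT.balanced
  -- the multiplication map m : T → X
  have hsbal : IsBalancedBiadd A (fun (x y : X) => μ x • y) := by
    refine ⟨?_, ?_, ?_, ?_, ?_⟩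
    · intro x x' y; show μ (x + x') • y = μ x • y + μ x' • y; rw [hμhom.1, add_smul]
    · intro x y y'; show μ x • (y + y') = μ x • y + μ x • y'; rw [smul_add]
    · intro a x y
      show μ (op a • x) • y = μ x • (a • y)
      rw [hμop, mul_smul]
    · intro a x y
      show μ (a • x) • y = a • (μ x • y)
      rw [hμsm, mul_smul]
    · intro a x y
      show μ x • (op a • y) = op a • (μ x • y)
      exact smul_comm (μ x) (op a) y
  obtain ⟨m, ⟨hmhom, hmspec⟩, -⟩ := hT.universal ⟨X⟩ (fun x y => μ x • y) hsbal
  have hm' : ∀ x y : X, m (t x y) = μ x • y := hmspec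
  -- the comultiplication map n : X → T
  have nc1 : e • t u u = t u u := by rw [← tsmul, hX.smul_e]
  have nc2 : op e • t u u = t u u := by rw [← topsmul, hX.op_smul_e]
  have nc3 : ∀ a : A, (e * a * e) • t u u = op (e * a * e) • t u u := by
    intro a
    calc (e * a * e) • t u u = t ((e * a * e) • u) u := (tsmul _ _ _).symm
      _ = t (op (e * a * e) • u) u := by rw [hX.balance]
      _ = t u ((e * a * e) • u) := tbal _ _ _
      _ = t u (op (e * a * e) • u) := by rw [hX.balance]
      _ = op (e * a * e) • t u u := topsmul _ _ _
  obtain ⟨n, ⟨hnhom, hnu⟩, -⟩ := hX.universal ⟨T⟩ (t u u) nc1 nc2 nc3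
  have hntmk : ∀ a b : A, n (tmk A e u a b) = t ((a * e) • u) (op (e * b) • u) := by
    intro a b
    rw [tmk, hnhom.2.1, hnhom.2.2, hnu, ← topsmul, ← tsmul]
  have pairform : ∀ b c b' c' : A,
      t (tmk A e u b c) (tmk A e u b' c')
        = t (((b * e) * ((e * (c * b')) * e)) • u) (op (e * c') • u) := by
    intro b c b' c'
    rw [tmk, tmk, ← tbal, ← smul_comm (b * e) (op (b' * e)) (op (e * c) • u),
      smul_smul (op (b' * e)) (op (e * c)) u, ← op_mul,
      show (e * c) * (b' * e) = (e * (c * b')) * e from by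
        rw [mul_assoc e c (b' * e), ← mul_assoc c b' e, ← mul_assoc e (c * b') e],
      ← hX.balance (c * b'), smul_smul (b * e) ((e * (c * b')) * e) u]
  have hC3 : ∀ b c b' c' : A,
      n (m (t (tmk A e u b c) (tmk A e u b' c'))) = t (tmk A e u b c) (tmk A e u b' c') := by
    intro b c b' c'
    rw [hm', hμtmk, hnhom.2.1, hntmk, ← tsmul, smul_smul, pairform,
      show ((b * e) * c) * (b' * e) = (b * e) * ((e * (c * b')) * e) from by
        simp [mul_assoc, eex]]
  have I1 : ∀ x y : X, n (m (t x y)) = t x y := by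
    refine hom_eq_on2 (f := fun x y => n (m (t x y))) (g := fun x y => t x y)
      ?_ ?_ ?_ ?_ hgen ?_
    · intro x y z; show n (m (t (x + y) z)) = n (m (t x z)) + n (m (t y z))
      rw [tadd1, hmhom.1, hnhom.1]
    · intro x y z; show n (m (t x (y + z))) = n (m (t x y)) + n (m (t x z))
      rw [tadd2, hmhom.1, hnhom.1]
    · intro x y z; exact tadd1 x y z
    · intro x y z; exact tadd2 x y z
    · rintro _ ⟨⟨b, c⟩, rfl⟩ _ ⟨⟨b', c'⟩, rfl⟩
      exact hC3 b c b' c'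
  obtain ⟨hTend, -, hTuniq⟩ := hT.universal ⟨T⟩ t hT.balanced
  have hnm : (fun θ : T => n (m θ)) = (fun θ : T => θ) := by
    rw [hTuniq _ ⟨isBimodHom_comp hmhom hnhom, I1⟩,
      hTuniq _ ⟨isBimodHom_id, fun _ _ => rfl⟩]
  have hnm' : ∀ θ : T, n (m θ) = θ := fun θ => congrFun hnm θ
  have hmn : (fun x : X => m (n x)) = (fun x : X => x) :=
    uniqX _ _ (isBimodHom_comp hnhom hmhom) isBimodHom_id
      (by show m (n u) = u; rw [hnu, hm', hμu, hX.smul_e]) rfl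
  have hmn' : ∀ x : X, m (n x) = x := fun x => congrFun hmn x
  have hnbij : Function.Bijective n :=
    Function.bijective_iff_has_inverse.2 ⟨m, hmn', hnm'⟩
  have hmbij : Function.Bijective m :=
    Function.bijective_iff_has_inverse.2 ⟨n, hnm', hmn'⟩
  -- ω = l ∘ m
  have hsbal2 : IsBalancedBiadd A (fun (x y : X) => μ x • l y) := by
    refine ⟨?_, ?_, ?_, ?_, ?_⟩
    · intro x x' y; show μ (x + x') • l y = μ x • l y + μ x' • l y; rw [hμhom.1, add_smul]
    · intro x y y'; show μ x • l (y + y') = μ x • l y + μ x • l y'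
      rw [hlhom.1, smul_add]
    · intro a x y
      show μ (op a • x) • l y = μ x • l (a • y)
      rw [hμop, hlhom.2.1, mul_smul]
    · intro a x y
      show μ (a • x) • l y = a • (μ x • l y)
      rw [hμsm, mul_smul]
    · intro a x y
      show μ x • l (op a • y) = op a • (μ x • l y)
      rw [hlhom.2.2]
      exact smul_comm (μ x) (op a) (l y)
  obtain ⟨h2, -, h2uniq⟩ := hT.universal ⟨X⟩ (fun x y => μ x • l y) hsbal2
  have hωspec : ∀ x y : X, ω (t x y) = μ x • l y := by
    refine hom_eq_on2 (f := fun x y => ω (t x y)) (g := fun x y => μ x • l y)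
      ?_ ?_ ?_ ?_ hgen ?_
    · intro x y z; show ω (t (x + y) z) = ω (t x z) + ω (t y z); rw [tadd1, hω.1]
    · intro x y z; show ω (t x (y + z)) = ω (t x y) + ω (t x z); rw [tadd2, hω.1]
    · intro x y z; show μ (x + y) • l z = μ x • l z + μ y • l z; rw [hμhom.1, add_smul]
    · intro x y z; show μ x • l (y + z) = μ x • l y + μ x • l z; rw [hlhom.1, smul_add]
    · rintro _ ⟨⟨b, c⟩, rfl⟩ _ ⟨⟨b', c'⟩, rfl⟩
      show ω (t (tmk A e u b c) (tmk A e u b' c')) = μ (tmk A e u b c) • l (tmk A e u b' c')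
      rw [hspec b c b' c', hμtmk b c, hltmk b' c', tmk, tmk,
        show e * (lam * c') = lam * c' from by rw [← mul_assoc, elam],
        op_mul lam c', mul_smul (op c') (op lam) u, hblam,
        ← smul_comm lam (op c') u, smul_smul ((b * e * c * b') * e) lam,
        smul_smul ((b * e) * c) ((b' * lam) * e),
        op_mul e c', mul_smul (op c') (op e) u, hX.op_smul_e,
        show ((b * e * c * b') * e) * lam = ((b * e) * c) * ((b' * lam) * e) from by
          simp [mul_assoc, elam, lame]]
  have hωlm : ∀ θ : T, ω θ = l (m θ) := by
    have e1 : ω = h2 := h2uniq ω ⟨hω, hωspec⟩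
    have e2 : (fun θ : T => l (m θ)) = h2 := h2uniq _
      ⟨isBimodHom_comp hmhom hlhom, fun x y => by
        show l (m (t x y)) = μ x • l y
        rw [hm' x y, hlhom.2.1]⟩
    intro θ; rw [e1, ← e2]
  -- the corner identity
  have I4 : ∀ x : X, e • op e • x = (e * μ x * e) • u := by
    refine hom_eq_on (f := fun x => e • op e • x) (g := fun x => (e * μ x * e) • u)
      ?_ ?_ hgen ?_
    · intro x y; show e • op e • (x + y) = e • op e • x + e • op e • y
      rw [smul_add, smul_add]
    · intro x y; show (e * μ (x + y) * e) • u = (e * μ x * e) • u + (e * μ y * e) • u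
      rw [hμhom.1, mul_add, add_mul, add_smul]
    · rintro _ ⟨⟨a, b⟩, rfl⟩
      show e • op e • tmk A e u a b = (e * μ (tmk A e u a b) * e) • u
      rw [hμtmk, tmk, ← smul_comm (a * e) (op e) (op (e * b) • u),
        smul_smul (op e) (op (e * b)) u, ← op_mul, ← hX.balance b,
        smul_smul (a * e) (e * b * e) u, smul_smul e ((a * e) * (e * b * e)) u,
        show e * ((a * e) * (e * b * e)) = e * (a * e * b) * e from by
          simp [mul_assoc, eex]]
  constructor
  · -- ω bijective → lam invertible
    intro hbij
    have hlbij : Function.Bijective l := by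
      have hle : l = fun x => ω (n x) := by
        funext x
        rw [hωlm (n x), hmn' x]
      rw [hle]
      exact hbij.comp hnbij
    obtain ⟨x₁, hx₁⟩ := hlbij.2 u
    have hinj := hlbij.1
    have he1 : e • x₁ = x₁ := hinj (by rw [hlhom.2.1, hx₁]; exact hX.smul_e)
    have he2 : op e • x₁ = x₁ := hinj (by rw [hlhom.2.2, hx₁]; exact hX.op_smul_e)
    have hbal1 : ∀ a : A, (e * a * e) • x₁ = op (e * a * e) • x₁ :=
      fun a => hinj (by rw [hlhom.2.1, hlhom.2.2, hx₁]; exact hX.balance a)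
    have hew : e * μ x₁ = μ x₁ := by
      have h := hμsm e x₁
      rw [he1] at h
      exact h.symm
    have hwe : μ x₁ * e = μ x₁ := by
      have h := hμop e x₁
      rw [he2] at h
      exact h.symm
    have hcw : ∀ a : A, (e * a * e) * μ x₁ = μ x₁ * (e * a * e) := by
      intro a
      have h1 := hμsm (e * a * e) x₁
      have h2 := hμop (e * a * e) x₁
      rw [hbal1 a] at h1
      exact h1.symm.trans h2
    have hx1w : x₁ = μ x₁ • u := by
      have h := I4 x₁
      rw [he2, he1] at h
      conv_lhs => rw [h]
      rw [hew, hwe]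
    have hwl : μ x₁ * lam = e := by
      have h : u = (μ x₁ * lam) • u := by
        calc u = l x₁ := hx₁.symm
          _ = l (μ x₁ • u) := by rw [← hx1w]
          _ = μ x₁ • l u := hlhom.2.1 _ _
          _ = μ x₁ • (lam • u) := by rw [hlu]
          _ = (μ x₁ * lam) • u := smul_smul _ _ _
      have h2 := congrArg μ h
      rw [hμu, hμc (μ x₁ * lam)] at h2
      conv_rhs => rw [h2]
      rw [mul_assoc, lame]
    have hlw : lam * μ x₁ = e := by
      have h := hlam2 (μ x₁)
      rw [hew, hwe] at h
      rw [h]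
      exact hwl
    refine ⟨μ x₁, ⟨?_, ?_⟩, hlw, hwl⟩
    · rw [hew, hwe]
    · intro a; exact (hcw a).symm
  · -- lam invertible → ω bijective
    rintro ⟨mu, hmu, hlm, hml⟩
    obtain ⟨hmu1, hmu2⟩ := hmu
    obtain ⟨l', hl'hom, hl'u⟩ := mkmid mu hmu1 hmu2
    have h1 : (fun x : X => l (l' x)) = (fun x : X => x) :=
      uniqX _ _ (isBimodHom_comp hl'hom hlhom) isBimodHom_id
        (by show l (l' u) = u; rw [hl'u, hlhom.2.1, hlu, smul_smul, hml, hX.smul_e]) rfl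
    have h2 : (fun x : X => l' (l x)) = (fun x : X => x) :=
      uniqX _ _ (isBimodHom_comp hlhom hl'hom) isBimodHom_id
        (by show l' (l u) = u; rw [hlu, hl'hom.2.1, hl'u, smul_smul, hlm, hX.smul_e]) rfl
    have hlbij : Function.Bijective l :=
      Function.bijective_iff_has_inverse.2
        ⟨l', fun x => congrFun h2 x, fun x => congrFun h1 x⟩
    have : ω = fun θ : T => l (m θ) := funext hωlm
    rw [this]
    exact hlbij.comp hmbij


end Paper
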